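/- For two agents with additive utilities over indivisible goods, there exists an EFX allocation A with social welfare at least (u1(M) + u2(M))/2; consequently, the price of EFX for two agents with unscaled utilities is at most 2. -/
import Mathlib


open Finset

/-- EFX comparison for indivisible goods: the agent with utility `u` holding `Ai` does
not envy `Aj` after the removal of any single good from `Aj`. -/
def EFXpair {G : Type*} [DecidableEq G] (u : G → ℝ) (Ai Aj : Finset G) : Prop :=
  ∀ g ∈ Aj, ∑ x ∈ Aj.erase g, u x ≤ ∑ x ∈ Ai, u x

/-- A most-balanced bipartition of `P` w.r.t. `u`, normalized so the chosen side is heavy. -/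
lemma efx_bal {G : Type*} [DecidableEq G] (u : G → ℝ) (P : Finset G) :
    ∃ S : Finset G, S ⊆ P ∧
      (∀ S' : Finset G, S' ⊆ P →
        |2 * ∑ x ∈ S, u x - ∑ x ∈ P, u x| ≤ |2 * ∑ x ∈ S', u x - ∑ x ∈ P, u x|) ∧
      ∑ x ∈ P, u x ≤ 2 * ∑ x ∈ S, u x := by
  obtain ⟨S₀, hS₀mem, hmin⟩ := Finset.exists_min_image P.powerset
    (fun S => |2 * ∑ x ∈ S, u x - ∑ x ∈ P, u x|) ⟨∅, Finset.empty_mem_powerset P⟩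
  rw [Finset.mem_powerset] at hS₀mem
  by_cases hh : ∑ x ∈ P, u x ≤ 2 * ∑ x ∈ S₀, u x
  · exact ⟨S₀, hS₀mem, fun S' hS' => hmin S' (Finset.mem_powerset.2 hS'), hh⟩
  · have hsdsum : ∑ x ∈ P \ S₀, u x = ∑ x ∈ P, u x - ∑ x ∈ S₀, u x := by
      have := Finset.sum_sdiff (f := u) hS₀mem
      linarith
    refine ⟨P \ S₀, Finset.sdiff_subset, ?_, ?_⟩
    · intro S' hS'
      have h1 := hmin S' (Finset.mem_powerset.2 hS')
      have h2 : 2 * ∑ x ∈ P \ S₀, u x - ∑ x ∈ P, u x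
          = -(2 * ∑ x ∈ S₀, u x - ∑ x ∈ P, u x) := by rw [hsdsum]; ring
      rw [h2, abs_neg]
      exact h1
    · rw [hsdsum]; linarith [not_le.1 hh]

/-- In a heavy side of a most-balanced cut of positive items, every item is at least the gap. -/
lemma efx_item {G : Type*} [DecidableEq G] (u : G → ℝ) (P S : Finset G)
    (hS : S ⊆ P) (hpos : ∀ g ∈ P, 0 < u g)
    (hmin : ∀ S' : Finset G, S' ⊆ P →
      |2 * ∑ x ∈ S, u x - ∑ x ∈ P, u x| ≤ |2 * ∑ x ∈ S', u x - ∑ x ∈ P, u x|)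
    (hheavy : ∑ x ∈ P, u x ≤ 2 * ∑ x ∈ S, u x) :
    ∀ g ∈ S, 2 * ∑ x ∈ S, u x - ∑ x ∈ P, u x ≤ u g := by
  intro g hg
  have hgpos : 0 < u g := hpos g (hS hg)
  have herase : (S.erase g) ⊆ P := (Finset.erase_subset g S).trans hS
  have h1 := hmin (S.erase g) herase
  rw [Finset.sum_erase_eq_sub hg] at h1
  set D := 2 * ∑ x ∈ S, u x - ∑ x ∈ P, u x with hD
  have hD0 : 0 ≤ D := by simp only [hD]; linarith
  rw [abs_of_nonneg hD0] at h1
  have h2 : 2 * (∑ x ∈ S, u x - u g) - ∑ x ∈ P, u x = D - 2 * u g := by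
    simp only [hD]; ring
  rw [h2] at h1
  rcases le_abs.1 h1 with h3 | h3
  · linarith
  · linarith

/-- Sum over the positive-support filter equals the full sum, for nonneg utilities. -/
lemma efx_fsum {G : Type*} [DecidableEq G] (u : G → ℝ) (M : Finset G)
    (hnn : ∀ g ∈ M, 0 ≤ u g) [DecidablePred fun g => 0 < u g] :
    ∑ x ∈ M.filter (fun g => 0 < u g), u x = ∑ x ∈ M, u x := by
  refine Finset.sum_subset (Finset.filter_subset _ _) ?_
  intro x hx hnx
  have : ¬ 0 < u x := fun h => hnx (Finset.mem_filter.2 ⟨hx, h⟩)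
  linarith [hnn x hx]

/-- Core existence: a full partition that is EFX both ways with welfare at least half. -/
lemma efx_core {G : Type*} [DecidableEq G] (M : Finset G) (u1 u2 : G → ℝ)
    (h1nn : ∀ g ∈ M, 0 ≤ u1 g) (h2nn : ∀ g ∈ M, 0 ≤ u2 g) :
    ∃ A B : Finset G, A ⊆ M ∧ B ⊆ M ∧ Disjoint A B ∧
      EFXpair u1 A B ∧ EFXpair u2 B A ∧
      ∑ g ∈ M, u1 g + ∑ g ∈ M, u2 g ≤ 2 * (∑ g ∈ A, u1 g + ∑ g ∈ B, u2 g) := by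
  classical
  set T1 := ∑ g ∈ M, u1 g with hT1
  set T2 := ∑ g ∈ M, u2 g with hT2
  by_cases halign : ∃ A : Finset G, A ⊆ M ∧
      (∑ g ∈ M \ A, u1 g ≤ ∑ g ∈ A, u1 g) ∧ (∑ g ∈ A, u2 g ≤ ∑ g ∈ M \ A, u2 g)
  · obtain ⟨A, hAM, hu1, hu2⟩ := halign
    refine ⟨A, M \ A, hAM, Finset.sdiff_subset, Finset.disjoint_sdiff, ?_, ?_, ?_⟩
    · intro g hg
      calc ∑ x ∈ (M \ A).erase g, u1 x ≤ ∑ x ∈ M \ A, u1 x := by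
            refine Finset.sum_le_sum_of_subset_of_nonneg (Finset.erase_subset _ _) ?_
            intro i hi _
            exact h1nn i (Finset.sdiff_subset hi)
        _ ≤ ∑ x ∈ A, u1 x := hu1
    · intro g hg
      calc ∑ x ∈ A.erase g, u2 x ≤ ∑ x ∈ A, u2 x := by
            refine Finset.sum_le_sum_of_subset_of_nonneg (Finset.erase_subset _ _) ?_
            intro i hi _
            exact h2nn i (hAM hi)
        _ ≤ ∑ x ∈ M \ A, u2 x := hu2
    · have e1 : ∑ g ∈ M \ A, u1 g + ∑ g ∈ A, u1 g = T1 := Finset.sum_sdiff hAM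
      have e2 : ∑ g ∈ M \ A, u2 g + ∑ g ∈ A, u2 g = T2 := Finset.sum_sdiff hAM
      linarith
  · push_neg at halign
    -- correlated case
    set P1 := M.filter (fun g => 0 < u1 g) with hP1def
    obtain ⟨X, hXP1, hminX, hheavyX⟩ := efx_bal u1 P1
    have hP1sum : ∑ x ∈ P1, u1 x = T1 := efx_fsum u1 M h1nn
    have hXM : X ⊆ M := hXP1.trans (Finset.filter_subset _ _)
    have hXc1 : ∑ g ∈ M \ X, u1 g + ∑ g ∈ X, u1 g = T1 := Finset.sum_sdiff hXM
    have hXc2 : ∑ g ∈ M \ X, u2 g + ∑ g ∈ X, u2 g = T2 := Finset.sum_sdiff hXM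
    have hD0 : T1 ≤ 2 * ∑ x ∈ X, u1 x := by rw [← hP1sum]; exact hheavyX
    have hmargin : ∑ g ∈ M \ X, u2 g < ∑ g ∈ X, u2 g := by
      refine halign X hXM ?_
      linarith
    by_cases hc : 2 * ∑ x ∈ X, u1 x - T1 ≤ 2 * ∑ x ∈ X, u2 x - T2
    · -- give the u1-light side to agent 1, heavy side X to agent 2
      refine ⟨M \ X, X, Finset.sdiff_subset, hXM, Finset.sdiff_disjoint, ?_, ?_, ?_⟩
      · intro g hg
        have hitem : 2 * ∑ x ∈ X, u1 x - ∑ x ∈ P1, u1 x ≤ u1 g := by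
          refine efx_item u1 P1 X hXP1 ?_ hminX hheavyX g hg
          intro i hi
          exact (Finset.mem_filter.1 hi).2
        rw [Finset.sum_erase_eq_sub hg]
        rw [hP1sum] at hitem
        linarith
      · intro g hg
        calc ∑ x ∈ (M \ X).erase g, u2 x ≤ ∑ x ∈ M \ X, u2 x := by
              refine Finset.sum_le_sum_of_subset_of_nonneg (Finset.erase_subset _ _) ?_
              intro i hi _
              exact h2nn i (Finset.sdiff_subset hi)
          _ ≤ ∑ x ∈ X, u2 x := hmargin.le
      · linarith
    · -- margin < D : use the most u2-balanced cut
      push_neg at hc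
      set P2 := M.filter (fun g => 0 < u2 g) with hP2def
      obtain ⟨W, hWP2, hminW, hheavyW⟩ := efx_bal u2 P2
      have hP2sum : ∑ x ∈ P2, u2 x = T2 := efx_fsum u2 M h2nn
      have hWM : W ⊆ M := hWP2.trans (Finset.filter_subset _ _)
      have hWc1 : ∑ g ∈ M \ W, u1 g + ∑ g ∈ W, u1 g = T1 := Finset.sum_sdiff hWM
      have hWc2 : ∑ g ∈ M \ W, u2 g + ∑ g ∈ W, u2 g = T2 := Finset.sum_sdiff hWM
      have hE0 : T2 ≤ 2 * ∑ x ∈ W, u2 x := by rw [← hP2sum]; exact hheavyW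
      -- W is u1-heavy (by correlation)
      have hWu1 : ∑ g ∈ M \ W, u1 g ≤ ∑ g ∈ W, u1 g := by
        by_contra hcon
        push_neg at hcon
        have h1 := halign (M \ W) Finset.sdiff_subset
        rw [Finset.sdiff_sdiff_eq_self hWM] at h1
        have h2 := h1 hcon.le
        linarith
      -- cross minimality 1 : D ≤ D'
      have hXW1 : ∑ x ∈ P1 ∩ W, u1 x = ∑ x ∈ W, u1 x := by
        refine Finset.sum_subset Finset.inter_subset_right ?_
        intro x hx hnx
        have hxM : x ∈ M := hWM hx
        have : ¬ 0 < u1 x := by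
          intro h
          exact hnx (Finset.mem_inter.2 ⟨Finset.mem_filter.2 ⟨hxM, h⟩, hx⟩)
        linarith [h1nn x hxM]
      have hcross1 := hminX (P1 ∩ W) Finset.inter_subset_left
      rw [hXW1, hP1sum] at hcross1
      have hD'0 : T1 ≤ 2 * ∑ x ∈ W, u1 x := by linarith
      rw [abs_of_nonneg (by linarith), abs_of_nonneg (by linarith)] at hcross1
      -- cross minimality 2 : E ≤ margin
      have hXW2 : ∑ x ∈ P2 ∩ X, u2 x = ∑ x ∈ X, u2 x := by
        refine Finset.sum_subset Finset.inter_subset_right ?_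
        intro x hx hnx
        have hxM : x ∈ M := hXM hx
        have : ¬ 0 < u2 x := by
          intro h
          exact hnx (Finset.mem_inter.2 ⟨Finset.mem_filter.2 ⟨hxM, h⟩, hx⟩)
        linarith [h2nn x hxM]
      have hcross2 := hminW (P2 ∩ X) Finset.inter_subset_left
      rw [hXW2, hP2sum] at hcross2
      rw [abs_of_nonneg (by linarith), abs_of_nonneg (by linarith)] at hcross2
      -- output (W, M \ W)
      refine ⟨W, M \ W, hWM, Finset.sdiff_subset, Finset.disjoint_sdiff, ?_, ?_, ?_⟩
      · intro g hg
        calc ∑ x ∈ (M \ W).erase g, u1 x ≤ ∑ x ∈ M \ W, u1 x := by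
              refine Finset.sum_le_sum_of_subset_of_nonneg (Finset.erase_subset _ _) ?_
              intro i hi _
              exact h1nn i (Finset.sdiff_subset hi)
          _ ≤ ∑ x ∈ W, u1 x := hWu1
      · intro g hg
        have hitem : 2 * ∑ x ∈ W, u2 x - ∑ x ∈ P2, u2 x ≤ u2 g := by
          refine efx_item u2 P2 W hWP2 ?_ hminW hheavyW g hg
          intro i hi
          exact (Finset.mem_filter.1 hi).2
        rw [Finset.sum_erase_eq_sub hg]
        rw [hP2sum] at hitem
        linarith
      · linarith

/-- For two agents with additive utilities over indivisible goods, there is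
an EFX (possibly partial) allocation with social welfare at least `(u1(M) + u2(M))/2`;
consequently the price of EFX for two agents with unscaled utilities is at most `2`. -/
theorem stmt_6 {G : Type*} [DecidableEq G] (M : Finset G) (u1 u2 : G → ℝ)
    (h1nn : ∀ g ∈ M, 0 ≤ u1 g) (h2nn : ∀ g ∈ M, 0 ≤ u2 g) :
    ∃ A1 A2 : Finset G, A1 ⊆ M ∧ A2 ⊆ M ∧ Disjoint A1 A2 ∧
      EFXpair u1 A1 A2 ∧ EFXpair u2 A2 A1 ∧
      (∑ g ∈ M, u1 g + ∑ g ∈ M, u2 g) / 2 ≤ ∑ g ∈ A1, u1 g + ∑ g ∈ A2, u2 g ∧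
      ∀ B1 B2 : Finset G, B1 ⊆ M → B2 ⊆ M → Disjoint B1 B2 →
        ∑ g ∈ B1, u1 g + ∑ g ∈ B2, u2 g ≤
          2 * (∑ g ∈ A1, u1 g + ∑ g ∈ A2, u2 g) := by
  obtain ⟨A, B, hAM, hBM, hdisj, hefx1, hefx2, hwel⟩ := efx_core M u1 u2 h1nn h2nn
  refine ⟨A, B, hAM, hBM, hdisj, hefx1, hefx2, by linarith, ?_⟩
  intro B1 B2 hB1 hB2 _
  have h1 : ∑ g ∈ B1, u1 g ≤ ∑ g ∈ M, u1 g := by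
    refine Finset.sum_le_sum_of_subset_of_nonneg hB1 ?_
    intro i hi _
    exact h1nn i hi
  have h2 : ∑ g ∈ B2, u2 g ≤ ∑ g ∈ M, u2 g := by
    refine Finset.sum_le_sum_of_subset_of_nonneg hB2 ?_
    intro i hi _
    exact h2nn i hi
  linarith
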